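/- Let n ≥ 1 and let V be a finite family of vectors in ℝⁿ consisting of: i₁ vectors of the form ±e_a; i₂ vectors of the form ±(e_b − e_a) with a ≠ b; i₃ vectors of the form ±(e_a + e_b) with a ≠ b; i₄ vectors of the form ±(e_a + e_b − e_c) with a, b, c pairwise distinct; and i₅ vectors of the form ±(e_a + e_b − e_c − e_d) with a, b, c, d pairwise distinct (here e_a denotes the a-th standard basis vector). Suppose the family V is minimally dependent (linearly dependent, but every proper subfamily is linearly independent) and i₃ + i₄ + i₅ > 0. Then i₁ ≤ 2i₃ + 3i₄ + 4i₅. -/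

import Mathlib

open Finset

noncomputable section

/-- A finite family of vectors is minimally dependent if it is linearly
dependent but every proper subfamily is linearly independent. -/
def MinimallyDependent {m n : ℕ} (v : Fin m → (Fin n → ℝ)) : Prop :=
  ¬ LinearIndependent ℝ v ∧
    ∀ s : Finset (Fin m), s ≠ Finset.univ →
      LinearIndependent ℝ (fun j : {x // x ∈ s} => v j)

/-- The `a`-th standard basis vector of `ℝⁿ`. -/
def er {n : ℕ} (a : Fin n) : Fin n → ℝ := Pi.single a 1

namespace MDAux

attribute [local instance] Classical.propDecidable

variable {m n : ℕ}

lemma fin5 (x : Fin 5) : x = 0 ∨ x = 1 ∨ x = 2 ∨ x = 3 ∨ x = 4 := by omega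

lemma exists_nonzero_coeffs (v : Fin m → (Fin n → ℝ)) (hmd : MinimallyDependent v) :
    ∃ c : Fin m → ℝ, (∑ j, c j • v j = 0) ∧ ∀ j, c j ≠ 0 := by
  obtain ⟨hdep, hind⟩ := hmd
  rw [Fintype.not_linearIndependent_iff] at hdep
  obtain ⟨c, hsumc, j0, hj0⟩ := hdep
  refine ⟨c, hsumc, ?_⟩
  intro j hj
  have hs : (Finset.univ.erase j) ≠ (Finset.univ : Finset (Fin m)) := by
    intro h
    have := Finset.mem_univ j
    rw [← h] at this
    exact (Finset.notMem_erase j _) this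
  have hli := hind _ hs
  rw [Fintype.linearIndependent_iff] at hli
  have hz : ∀ x : {x // x ∈ Finset.univ.erase j}, c x.1 = 0 := by
    apply hli (fun x => c x.1)
    rw [Finset.sum_coe_sort _ (fun l => c l • v l),
      Finset.sum_erase _ (by rw [hj, zero_smul])]
    exact hsumc
  rcases eq_or_ne j0 j with h | h
  · exact hj0 (h ▸ hj)
  · exact hj0 (hz ⟨j0, Finset.mem_erase.2 ⟨h, Finset.mem_univ _⟩⟩)

variable (v : Fin m → (Fin n → ℝ)) (t : Fin m → Fin 5)

def rel (a b : Fin n) : Prop :=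
  ∃ j, t j = 1 ∧ (v j = er b - er a ∨ v j = -(er b - er a))

def st : Setoid (Fin n) := Relation.EqvGen.setoid (rel v t)

def qk (a : Fin n) : Quotient (st v t) := Quotient.mk (st v t) a

def phi : (Fin n → ℝ) →ₗ[ℝ] (Quotient (st v t) → ℝ) where
  toFun x q := ∑ a, if qk v t a = q then x a else 0
  map_add' x y := by
    classical
    funext q
    simp only [Pi.add_apply]
    rw [← Finset.sum_add_distrib]
    exact Finset.sum_congr rfl fun a _ => by split_ifs <;> simp
  map_smul' c x := by
    classical
    funext q
    simp only [Pi.smul_apply, RingHom.id_apply, smul_eq_mul]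
    rw [Finset.mul_sum]
    exact Finset.sum_congr rfl fun a _ => by split_ifs <;> simp

lemma phi_er (b : Fin n) (q : Quotient (st v t)) :
    phi v t (er b) q = if qk v t b = q then 1 else 0 := by
  classical
  show (∑ a, if qk v t a = q then er b a else 0) = _
  have h : ∀ a ∈ Finset.univ, (if qk v t a = q then er b a else 0)
      = if a = b then (if qk v t b = q then 1 else 0) else 0 := by
    intro a _
    rcases eq_or_ne a b with rfl | hab
    · simp [er, Pi.single_apply]
    · simp [er, Pi.single_apply, hab]
  rw [Finset.sum_congr rfl h, Finset.sum_ite_eq' Finset.univ b]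
  simp

lemma phi_type1 {j : Fin m} (hj : t j = 1)
    (h1 : ∀ j, t j = 1 → ∃ a b : Fin n, a ≠ b ∧
      (v j = er b - er a ∨ v j = -(er b - er a))) :
    phi v t (v j) = 0 := by
  obtain ⟨a, b, _, hv⟩ := h1 j hj
  have hab : qk v t a = qk v t b :=
    Quotient.sound (Relation.EqvGen.rel a b ⟨j, hj, hv⟩)
  funext q
  rcases hv with h | h <;>
    simp [h, map_sub, map_neg, phi_er, hab, Pi.zero_apply, Pi.neg_apply, Pi.sub_apply]

def U : Submodule ℝ (Fin n → ℝ) :=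
  Submodule.span ℝ (Set.range fun l : {l : Fin m // t l = 1} => v l.1)

lemma eqvGen_mem {a b : Fin n} (hab : Relation.EqvGen (rel v t) a b) :
    er b - er a ∈ U v t := by
  induction hab with
  | rel x y h =>
      obtain ⟨j, hj, h | h⟩ := h
      · exact Submodule.subset_span ⟨⟨j, hj⟩, h⟩
      · have hx : er y - er x = -(v j) := by rw [h, neg_neg]
        rw [hx]
        exact Submodule.neg_mem _ (Submodule.subset_span ⟨⟨j, hj⟩, rfl⟩)
  | refl x => simp
  | symm x y h ih =>
      have := Submodule.neg_mem _ ih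
      simpa [neg_sub] using this
  | trans x y z h1 h2 ih1 ih2 =>
      have hx : er z - er x = (er z - er y) + (er y - er x) := by abel
      rw [hx]
      exact Submodule.add_mem _ ih2 ih1

lemma card_pair_le {α : Type*} [DecidableEq α] (x y : α) :
    ({x, y} : Finset α).card ≤ 2 := by
  refine (Finset.card_insert_le _ _).trans ?_
  simp

lemma card_triple_le {α : Type*} [DecidableEq α] (x y z : α) :
    ({x, y, z} : Finset α).card ≤ 3 := by
  refine (Finset.card_insert_le _ _).trans ?_
  have := card_pair_le y z
  omega

lemma card_quad_le {α : Type*} [DecidableEq α] (x y z w : α) :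
    ({x, y, z, w} : Finset α).card ≤ 4 := by
  refine (Finset.card_insert_le _ _).trans ?_
  have := card_triple_le y z w
  omega

end MDAux

open MDAux

/-- For a minimally dependent family of reaction vectors of a
binary network, consisting of `i₁` vectors `±e_a`, `i₂` vectors `±(e_b - e_a)`,
`i₃` vectors `±(e_a + e_b)` (two distinct species), `i₄` vectors
`±(e_a + e_b - e_c)` (three distinct species) and `i₅` vectors
`±(e_a + e_b - e_c - e_d)` (four distinct species), with `i₃ + i₄ + i₅ > 0`,
we have `i₁ ≤ 2i₃ + 3i₄ + 4i₅`. -/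
theorem minimallyDependent_count_bound {m n : ℕ}
    (v : Fin m → (Fin n → ℝ)) (t : Fin m → Fin 5)
    (h0 : ∀ j, t j = 0 → ∃ a : Fin n, v j = er a ∨ v j = -er a)
    (h1 : ∀ j, t j = 1 → ∃ a b : Fin n, a ≠ b ∧
      (v j = er b - er a ∨ v j = -(er b - er a)))
    (h2 : ∀ j, t j = 2 → ∃ a b : Fin n, a ≠ b ∧
      (v j = er a + er b ∨ v j = -(er a + er b)))
    (h3 : ∀ j, t j = 3 → ∃ a b c : Fin n, a ≠ b ∧ a ≠ c ∧ b ≠ c ∧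
      (v j = er a + er b - er c ∨ v j = -(er a + er b - er c)))
    (h4 : ∀ j, t j = 4 → ∃ a b c d : Fin n, a ≠ b ∧ a ≠ c ∧ a ≠ d ∧ b ≠ c ∧ b ≠ d ∧ c ≠ d ∧
      (v j = er a + er b - er c - er d ∨ v j = -(er a + er b - er c - er d)))
    (hmd : MinimallyDependent v)
    (i1 i2 i3 i4 i5 : ℕ)
    (hi1 : i1 = (Finset.univ.filter fun j : Fin m => t j = 0).card)
    (hi2 : i2 = (Finset.univ.filter fun j : Fin m => t j = 1).card)
    (hi3 : i3 = (Finset.univ.filter fun j : Fin m => t j = 2).card)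
    (hi4 : i4 = (Finset.univ.filter fun j : Fin m => t j = 3).card)
    (hi5 : i5 = (Finset.univ.filter fun j : Fin m => t j = 4).card)
    (hpos : 0 < i3 + i4 + i5) :
    i1 ≤ 2 * i3 + 3 * i4 + 4 * i5 := by
  classical
  -- dispose of the degenerate case n = 0
  rcases Nat.eq_zero_or_pos n with hn | hn
  · subst hn
    have he : (Finset.univ.filter fun j : Fin m => t j = 0) = ∅ := by
      ext j
      simp only [Finset.mem_filter, Finset.mem_univ, true_and, Finset.notMem_empty, iff_false]
      intro hj
      obtain ⟨a, _⟩ := h0 j hj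
      exact a.elim0
    rw [hi1, he]
    simp
  haveI : Fintype (Quotient (st v t)) :=
    @Quotient.fintype _ _ (st v t) (fun _ _ => Classical.propDecidable _)
  obtain ⟨c, hsum, hc⟩ := exists_nonzero_coeffs v hmd
  -- a type-2/3/4 vector exists
  obtain ⟨k0, hk00, hk01⟩ : ∃ k0 : Fin m, t k0 ≠ 0 ∧ t k0 ≠ 1 := by
    have h345 : 0 < i3 ∨ 0 < i4 ∨ 0 < i5 := by omega
    rcases h345 with h | h | h
    · rw [hi3] at h
      obtain ⟨k, hk⟩ := Finset.card_pos.mp h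
      rw [Finset.mem_filter] at hk
      exact ⟨k, by rw [hk.2]; omega, by rw [hk.2]; omega⟩
    · rw [hi4] at h
      obtain ⟨k, hk⟩ := Finset.card_pos.mp h
      rw [Finset.mem_filter] at hk
      exact ⟨k, by rw [hk.2]; omega, by rw [hk.2]; omega⟩
    · rw [hi5] at h
      obtain ⟨k, hk⟩ := Finset.card_pos.mp h
      rw [Finset.mem_filter] at hk
      exact ⟨k, by rw [hk.2]; omega, by rw [hk.2]; omega⟩
  choose a0 ha0 using h0
  -- Step A : distinct type-0 vectors live on distinct classes
  have stepA : ∀ j k (hj : t j = 0) (hk : t k = 0),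
      qk v t (a0 j hj) = qk v t (a0 k hk) → j = k := by
    intro j k hj hk hq
    by_contra hjk
    have hmem : er (a0 k hk) - er (a0 j hj) ∈ U v t :=
      eqvGen_mem v t (Quotient.exact hq)
    rw [U, Submodule.mem_span_range_iff_exists_fun] at hmem
    obtain ⟨d, hd⟩ := hmem
    set T : Finset (Fin m) := Finset.univ.filter (fun l => t l = 1) with hT
    set s : Finset (Fin m) := insert j (insert k T) with hs
    have hjT : j ∉ T := by simp [hT, hj]
    have hkT : k ∉ T := by simp [hT, hk]
    have hjks : j ∉ insert k T := by simp [hkT, hjk, hjT]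
    have hsne : s ≠ Finset.univ := by
      intro h
      have hk0s : k0 ∈ s := h ▸ Finset.mem_univ k0
      rw [hs] at hk0s
      simp only [Finset.mem_insert, hT, Finset.mem_filter, Finset.mem_univ, true_and] at hk0s
      rcases hk0s with h' | h' | h'
      · exact hk00 (h' ▸ hj)
      · exact hk00 (h' ▸ hk)
      · exact hk01 h'
    obtain ⟨σj, hσj, hσjne⟩ : ∃ σ : ℝ, er (a0 j hj) = σ • v j ∧ σ ≠ 0 := by
      rcases ha0 j hj with h | h
      · exact ⟨1, by simp [h], one_ne_zero⟩
      · exact ⟨-1, by simp [h], by norm_num⟩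
    obtain ⟨σk, hσk, hσkne⟩ : ∃ σ : ℝ, er (a0 k hk) = σ • v k ∧ σ ≠ 0 := by
      rcases ha0 k hk with h | h
      · exact ⟨1, by simp [h], one_ne_zero⟩
      · exact ⟨-1, by simp [h], by norm_num⟩
    set g : Fin m → ℝ := fun l =>
      if l = j then -σj else if l = k then σk
      else if h : t l = 1 then -(d ⟨l, h⟩) else 0 with hg
    have hTd : ∑ l ∈ T, g l • v l = -(σk • v k - σj • v j) := by
      rw [← hσj, ← hσk, ← hd,
        Finset.sum_subtype T (p := fun l => t l = 1)
          (by intro x; simp [hT]) (fun l => g l • v l), ← Finset.sum_neg_distrib]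
      apply Finset.sum_congr rfl
      intro x _
      have hxj : x.1 ≠ j := by
        intro h
        have h2 := x.2
        rw [h, hj] at h2
        exact absurd h2 (by omega)
      have hxk : x.1 ≠ k := by
        intro h
        have h2 := x.2
        rw [h, hk] at h2
        exact absurd h2 (by omega)
      simp only [hg, hxj, hxk, if_false, x.2, dif_pos]
      rw [neg_smul]
    have hgsum : ∑ l ∈ s, g l • v l = 0 := by
      rw [hs, Finset.sum_insert hjks, Finset.sum_insert hkT, hTd]
      have gj : g j = -σj := by simp [hg]
      have gk : g k = σk := by
        have : k ≠ j := fun h => hjk h.symm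
        simp [hg, this]
      rw [gj, gk]
      module
    have hli := hmd.2 s hsne
    rw [Fintype.linearIndependent_iff] at hli
    have hz := hli (fun x => g x.1)
      (by rw [Finset.sum_coe_sort s (fun l => g l • v l)]; exact hgsum)
      ⟨j, by rw [hs]; exact Finset.mem_insert_self _ _⟩
    simp only [hg, if_pos rfl] at hz
    exact hσjne (neg_eq_zero.mp hz)
  -- the image of the dependence under phi
  have hφ : ∑ l, c l • phi v t (v l) = 0 := by
    have hh := congrArg (phi v t) hsum
    simpa using hh
  have hval : ∀ j (hj : t j = 0),
      phi v t (v j) (qk v t (a0 j hj)) ≠ 0 := by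
    intro j hj
    rcases ha0 j hj with h | h <;> simp [h, phi_er]
  -- Step B : each type-0 class is hit by a type-2/3/4 vector
  have stepB : ∀ j (hj : t j = 0), ∃ k, (t k = 2 ∨ t k = 3 ∨ t k = 4) ∧
      phi v t (v k) (qk v t (a0 j hj)) ≠ 0 := by
    intro j hj
    by_contra hcon
    push_neg at hcon
    have hq0 : ∑ l, c l • phi v t (v l) (qk v t (a0 j hj)) = 0 := by
      have := congrFun hφ (qk v t (a0 j hj))
      simpa using this
    have hothers : ∀ l ∈ Finset.univ, l ≠ j →
        c l • phi v t (v l) (qk v t (a0 j hj)) = 0 := by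
      intro l _ hl
      rcases fin5 (t l) with h | h | h | h | h
      · -- another type-0 vector : distinct class
        rcases ha0 l h with hv | hv
        · by_cases hqq : qk v t (a0 l h) = qk v t (a0 j hj)
          · exact absurd (stepA l j h hj hqq) hl
          · simp [hv, phi_er, hqq]
        · by_cases hqq : qk v t (a0 l h) = qk v t (a0 j hj)
          · exact absurd (stepA l j h hj hqq) hl
          · simp [hv, phi_er, hqq]
      · rw [phi_type1 v t h h1]
        simp
      · rw [hcon l (Or.inl h), smul_zero]
      · rw [hcon l (Or.inr (Or.inl h)), smul_zero]
      · rw [hcon l (Or.inr (Or.inr h)), smul_zero]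
    have hsingle := Finset.sum_eq_single_of_mem j (Finset.mem_univ j) hothers
    rw [hsingle] at hq0
    exact hval j hj (by
      rcases (by simpa [smul_eq_mul] using hq0 :
          c j = 0 ∨ phi v t (v j) (qk v t (a0 j hj)) = 0) with h | h
      · exact absurd h (hc j)
      · exact h)
  -- counting
  choose K hK using stepB
  have hne : Nonempty (Quotient (st v t)) := ⟨qk v t ⟨0, hn⟩⟩
  set F : Fin m → Fin m × Quotient (st v t) := fun j =>
    if hj : t j = 0 then (K j hj, qk v t (a0 j hj)) else (j, Classical.arbitrary _) with hF
  set X : Finset (Fin m × Quotient (st v t)) :=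
    Finset.univ.filter (fun p => (t p.1 = 2 ∨ t p.1 = 3 ∨ t p.1 = 4) ∧
      phi v t (v p.1) p.2 ≠ 0) with hX
  set S0 : Finset (Fin m) := Finset.univ.filter (fun j : Fin m => t j = 0) with hS0
  have hmaps : ∀ j ∈ S0, F j ∈ X := by
    intro j hjm
    rw [hS0, Finset.mem_filter] at hjm
    obtain ⟨hK1, hK2⟩ := hK j hjm.2
    rw [hF, hX, Finset.mem_filter]
    simp only [hjm.2, dif_pos]
    exact ⟨Finset.mem_univ _, hK1, hK2⟩
  have hinj : Set.InjOn F ↑S0 := by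
    intro j hjm k hkm he
    rw [hS0, Finset.coe_filter] at hjm hkm
    simp only [Set.mem_setOf_eq] at hjm hkm
    rw [hF] at he
    simp only [hjm.2, hkm.2, dif_pos] at he
    exact stepA j k hjm.2 hkm.2 (congrArg Prod.snd he)
  have hcard1 : i1 ≤ X.card := by
    rw [hi1]
    exact Finset.card_le_card_of_injOn F hmaps hinj
  set T234 : Finset (Fin m) :=
    Finset.univ.filter (fun k : Fin m => t k = 2 ∨ t k = 3 ∨ t k = 4) with hT234
  have hfib : X.card = ∑ k ∈ T234, (X.filter (fun p => p.1 = k)).card := by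
    apply Finset.card_eq_sum_card_fiberwise (f := Prod.fst)
    intro p hp
    rw [Finset.mem_coe] at hp
    simp only [hX, Finset.mem_filter] at hp
    rw [Finset.mem_coe]
    simp only [hT234, Finset.mem_filter]
    exact ⟨Finset.mem_univ _, hp.2.1⟩
  have hsupp : ∀ k ∈ T234, (X.filter (fun p => p.1 = k)).card ≤
      (if t k = 2 then 2 else if t k = 3 then 3 else 4) := by
    intro k hkm
    rw [hT234, Finset.mem_filter] at hkm
    have hstep : (X.filter (fun p => p.1 = k)).card ≤
        (Finset.univ.filter (fun q => phi v t (v k) q ≠ 0)).card := by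
      apply Finset.card_le_card_of_injOn Prod.snd
      · intro p hp
        rw [Finset.mem_coe, Finset.mem_filter, hX, Finset.mem_filter] at hp
        rw [Finset.mem_coe, Finset.mem_filter]
        refine ⟨Finset.mem_univ _, ?_⟩
        rw [← hp.2]
        exact hp.1.2.2
      · intro p hp p' hp' hss
        rw [Finset.coe_filter] at hp hp'
        simp only [Set.mem_setOf_eq] at hp hp'
        exact Prod.ext (hp.2.trans hp'.2.symm) hss
    refine hstep.trans ?_
    rcases hkm.2 with h | h | h
    · obtain ⟨a, b, hab, hv⟩ := h2 k h
      have hsub : Finset.univ.filter (fun q => phi v t (v k) q ≠ 0) ⊆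
          {qk v t a, qk v t b} := by
        intro q hq
        rw [Finset.mem_filter] at hq
        by_contra hq2
        simp only [Finset.mem_insert, Finset.mem_singleton] at hq2
        push_neg at hq2
        have e1 : qk v t a ≠ q := fun hh => hq2.1 hh.symm
        have e2 : qk v t b ≠ q := fun hh => hq2.2 hh.symm
        apply hq.2
        rcases hv with hv | hv <;> simp [hv, phi_er, e1, e2]
      rw [if_pos h]
      exact (Finset.card_le_card hsub).trans (card_pair_le _ _)
    · obtain ⟨a, b, cc, _, _, _, hv⟩ := h3 k h
      have hsub : Finset.univ.filter (fun q => phi v t (v k) q ≠ 0) ⊆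
          {qk v t a, qk v t b, qk v t cc} := by
        intro q hq
        rw [Finset.mem_filter] at hq
        by_contra hq2
        simp only [Finset.mem_insert, Finset.mem_singleton] at hq2
        push_neg at hq2
        have e1 : qk v t a ≠ q := fun hh => hq2.1 hh.symm
        have e2 : qk v t b ≠ q := fun hh => hq2.2.1 hh.symm
        have e3 : qk v t cc ≠ q := fun hh => hq2.2.2 hh.symm
        apply hq.2
        rcases hv with hv | hv <;> simp [hv, phi_er, e1, e2, e3]
      have h2' : t k ≠ 2 := by rw [h]; omega
      rw [if_neg h2', if_pos h]
      exact (Finset.card_le_card hsub).trans (card_triple_le _ _ _)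
    · obtain ⟨a, b, cc, dd, _, _, _, _, _, _, hv⟩ := h4 k h
      have hsub : Finset.univ.filter (fun q => phi v t (v k) q ≠ 0) ⊆
          {qk v t a, qk v t b, qk v t cc, qk v t dd} := by
        intro q hq
        rw [Finset.mem_filter] at hq
        by_contra hq2
        simp only [Finset.mem_insert, Finset.mem_singleton] at hq2
        push_neg at hq2
        have e1 : qk v t a ≠ q := fun hh => hq2.1 hh.symm
        have e2 : qk v t b ≠ q := fun hh => hq2.2.1 hh.symm
        have e3 : qk v t cc ≠ q := fun hh => hq2.2.2.1 hh.symm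
        have e4 : qk v t dd ≠ q := fun hh => hq2.2.2.2 hh.symm
        apply hq.2
        rcases hv with hv | hv <;> simp [hv, phi_er, e1, e2, e3, e4]
      have h2' : t k ≠ 2 := by rw [h]; omega
      have h3' : t k ≠ 3 := by rw [h]; omega
      rw [if_neg h2', if_neg h3']
      exact (Finset.card_le_card hsub).trans (card_quad_le _ _ _ _)
  have hsum234 : ∑ k ∈ T234, (if t k = 2 then 2 else if t k = 3 then 3 else 4)
      = 2 * i3 + 3 * i4 + 4 * i5 := by
    have hsplit : T234 = (Finset.univ.filter (fun k : Fin m => t k = 2)) ∪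
        ((Finset.univ.filter (fun k : Fin m => t k = 3)) ∪
         (Finset.univ.filter (fun k : Fin m => t k = 4))) := by
      ext x
      rw [hT234]
      simp only [Finset.mem_filter, Finset.mem_univ, true_and, Finset.mem_union]
    have hd34 : Disjoint (Finset.univ.filter (fun k : Fin m => t k = 3))
        (Finset.univ.filter (fun k : Fin m => t k = 4)) := by
      rw [Finset.disjoint_left]
      intro a ha hb
      rw [Finset.mem_filter] at ha hb
      omega
    have hd234 : Disjoint (Finset.univ.filter (fun k : Fin m => t k = 2))
        ((Finset.univ.filter (fun k : Fin m => t k = 3)) ∪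
         (Finset.univ.filter (fun k : Fin m => t k = 4))) := by
      rw [Finset.disjoint_left]
      intro a ha hb
      rw [Finset.mem_union, Finset.mem_filter, Finset.mem_filter] at hb
      rw [Finset.mem_filter] at ha
      omega
    rw [hsplit, Finset.sum_union hd234, Finset.sum_union hd34]
    have e2 : ∑ k ∈ Finset.univ.filter (fun k : Fin m => t k = 2),
        (if t k = 2 then 2 else if t k = 3 then 3 else 4) = 2 * i3 := by
      rw [Finset.sum_congr rfl (fun k hk => ?_), Finset.sum_const, hi3, smul_eq_mul,
        mul_comm]
      rw [Finset.mem_filter] at hk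
      rw [if_pos hk.2]
    have e3 : ∑ k ∈ Finset.univ.filter (fun k : Fin m => t k = 3),
        (if t k = 2 then 2 else if t k = 3 then 3 else 4) = 3 * i4 := by
      rw [Finset.sum_congr rfl (fun k hk => ?_), Finset.sum_const, hi4, smul_eq_mul,
        mul_comm]
      rw [Finset.mem_filter] at hk
      rw [if_neg (by omega : ¬ t k = 2), if_pos hk.2]
    have e4 : ∑ k ∈ Finset.univ.filter (fun k : Fin m => t k = 4),
        (if t k = 2 then 2 else if t k = 3 then 3 else 4) = 4 * i5 := by
      rw [Finset.sum_congr rfl (fun k hk => ?_), Finset.sum_const, hi5, smul_eq_mul,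
        mul_comm]
      rw [Finset.mem_filter] at hk
      rw [if_neg (by omega : ¬ t k = 2), if_neg (by omega : ¬ t k = 3)]
    rw [e2, e3, e4]
    omega
  calc i1 ≤ X.card := hcard1
    _ = ∑ k ∈ T234, (X.filter (fun p => p.1 = k)).card := hfib
    _ ≤ ∑ k ∈ T234, (if t k = 2 then 2 else if t k = 3 then 3 else 4) :=
        Finset.sum_le_sum hsupp
    _ = 2 * i3 + 3 * i4 + 4 * i5 := hsum234
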